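/- arXiv:2111.14045 — 4 statements merged into one kernel-verified Lean document; each statement's English description precedes it below -/
import Mathlib

section
/- Let R be a polynomial ring over ℂ (a Noetherian integral domain), A ∈ R^{ℓ×k}, and M = im_R(A^T) ⊆ R^k. The transposed sequence R^{k'} ←B^T R^k ←A^T R^ℓ (with B the syzygy matrix of A) is exact if and only if R^k/M is torsion-free, and this holds if and only if either M = R^k or Ass(R^k/M) = {(0)}. -/
open Matrix LinearMap Module

section FieldDuality

variable {K : Type*} [Field K] {l k k' : ℕ}

theorem myaux_field_dual (A : Matrix (Fin l) (Fin k) K) (B : Matrix (Fin k) (Fin k') K)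
    (hAB : A * B = 0)
    (h : LinearMap.ker A.mulVecLin ≤ LinearMap.range B.mulVecLin) :
    LinearMap.ker B.transpose.mulVecLin ≤ LinearMap.range A.transpose.mulVecLin := by
  have hBA : Bᵀ * Aᵀ = 0 := by rw [← Matrix.transpose_mul, hAB, Matrix.transpose_zero]
  have hle : LinearMap.range Aᵀ.mulVecLin ≤ LinearMap.ker Bᵀ.mulVecLin := by
    rintro x ⟨y, rfl⟩
    have : Bᵀ.mulVecLin (Aᵀ.mulVecLin y) = (Bᵀ * Aᵀ).mulVecLin y := by
      rw [Matrix.mulVecLin_mul]; rfl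
    rw [LinearMap.mem_ker, this, hBA]; simp
  have hr1 := LinearMap.finrank_range_add_finrank_ker A.mulVecLin
  have hr2 := LinearMap.finrank_range_add_finrank_ker Bᵀ.mulVecLin
  have hm : finrank K (LinearMap.ker A.mulVecLin) ≤ finrank K (LinearMap.range B.mulVecLin) :=
    Submodule.finrank_mono h
  have hAr : finrank K (LinearMap.range Aᵀ.mulVecLin) = finrank K (LinearMap.range A.mulVecLin) :=
    Matrix.rank_transpose A
  have hBr : finrank K (LinearMap.range Bᵀ.mulVecLin) = finrank K (LinearMap.range B.mulVecLin) :=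
    Matrix.rank_transpose B
  have hd : finrank K (LinearMap.ker Bᵀ.mulVecLin) ≤
      finrank K (LinearMap.range Aᵀ.mulVecLin) := by omega
  exact (Submodule.eq_of_le_of_finrank_le hle hd).ge

end FieldDuality

section Domain

variable {R : Type*} [CommRing R] [IsDomain R] {l k k' : ℕ}

theorem myaux_key (A : Matrix (Fin l) (Fin k) R) (B : Matrix (Fin k) (Fin k') R)
    (hB : Function.Exact B.mulVecLin A.mulVecLin) (x : Fin k → R) :
    B.transpose.mulVecLin x = 0 ↔
      ∃ r : R, r ≠ 0 ∧ r • x ∈ LinearMap.range A.transpose.mulVecLin := by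
  classical
  have hAB : A * B = 0 := by
    have h1 : (A * B).mulVecLin = 0 := by
      rw [Matrix.mulVecLin_mul]
      exact LinearMap.ext fun v => hB.apply_apply_eq_zero v
    ext i j
    have h3 := congrFun (LinearMap.congr_fun h1 (Pi.single j 1)) i
    have h4 : (A * B) i j = (A *ᵥ B.col j) i := rfl
    rw [h4]
    simpa [Matrix.mulVecLin_apply, Matrix.mulVec_single] using h3
  constructor
  · intro hx
    set K := FractionRing R
    set f : R →+* K := algebraMap R K with hf
    have hfinj : Function.Injective f := IsFractionRing.injective R K
    set A' : Matrix (Fin l) (Fin k) K := A.map f with hA'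
    set B' : Matrix (Fin k) (Fin k') K := B.map f with hB'
    have hAB' : A' * B' = 0 := by
      rw [hA', hB', ← Matrix.map_mul, hAB, Matrix.map_zero f (map_zero f)]
    have hker : LinearMap.ker A'.mulVecLin ≤ LinearMap.range B'.mulVecLin := by
      intro v hv
      rw [LinearMap.mem_ker, Matrix.mulVecLin_apply] at hv
      obtain ⟨b, hb⟩ := IsLocalization.exist_integer_multiples_of_finite (nonZeroDivisors R) v
      choose w hw using hb
      have hfb : f (b : R) ≠ 0 := fun h =>
        nonZeroDivisors.coe_ne_zero b (hfinj (h.trans (map_zero f).symm))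
      have hwv : ∀ i, f (w i) = f (b : R) * v i := by
        intro i; rw [hw i, Algebra.smul_def]
      have e2 : (f ∘ w) = f (b : R) • v := by
        funext j; simp [hwv j]
      have hAw : A.mulVec w = 0 := by
        funext i
        apply hfinj
        have e1 : f ((A *ᵥ w) i) = (A' *ᵥ (f ∘ w)) i := RingHom.map_mulVec f A w i
        rw [e1, e2, Matrix.mulVec_smul, hv]
        simp
      obtain ⟨u, hu⟩ := (hB w).mp hAw
      refine ⟨(f (b : R))⁻¹ • (f ∘ u), ?_⟩
      rw [Matrix.mulVecLin_apply, Matrix.mulVec_smul]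
      have e3 : B' *ᵥ (f ∘ u) = f ∘ w := by
        funext i
        rw [Function.comp_apply, ← show B.mulVec u = w from hu]
        exact (RingHom.map_mulVec f B u i).symm
      rw [e3, e2]
      funext i
      simp only [Pi.smul_apply, smul_eq_mul]
      exact inv_mul_cancel_left₀ hfb (v i)
    have hdual := myaux_field_dual A' B' hAB' hker
    have hx' : (f ∘ x) ∈ LinearMap.ker B'ᵀ.mulVecLin := by
      rw [LinearMap.mem_ker, Matrix.mulVecLin_apply]
      funext i
      have e1 : (B'ᵀ *ᵥ (f ∘ x)) i = f ((Bᵀ *ᵥ x) i) := by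
        rw [show B'ᵀ = Bᵀ.map f from Matrix.transpose_map.symm]
        exact (RingHom.map_mulVec f Bᵀ x i).symm
      rw [e1, show Bᵀ *ᵥ x = 0 from hx]
      simp
    obtain ⟨y, hy⟩ := hdual hx'
    rw [Matrix.mulVecLin_apply] at hy
    obtain ⟨b, hb⟩ := IsLocalization.exist_integer_multiples_of_finite (nonZeroDivisors R) y
    choose w hw using hb
    have hwv : ∀ i, f (w i) = f (b : R) * y i := by
      intro i; rw [hw i, Algebra.smul_def]
    have e2 : (f ∘ w) = f (b : R) • y := by funext j; simp [hwv j]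
    refine ⟨(b : R), nonZeroDivisors.coe_ne_zero b, w, ?_⟩
    rw [Matrix.mulVecLin_apply]
    funext i
    apply hfinj
    have e1 : f ((Aᵀ *ᵥ w) i) = (Aᵀ.map f *ᵥ (f ∘ w)) i := RingHom.map_mulVec f Aᵀ w i
    rw [e1, e2, show Aᵀ.map f = A'ᵀ from Matrix.transpose_map, Matrix.mulVec_smul, hy]
    simp [_root_.map_mul]
  · rintro ⟨r, hr, y, hy⟩
    rw [Matrix.mulVecLin_apply] at hy
    show Bᵀ *ᵥ x = 0
    have h1 : Bᵀ *ᵥ (r • x) = 0 := by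
      rw [← hy, Matrix.mulVec_mulVec, ← Matrix.transpose_mul, hAB, Matrix.transpose_zero,
        Matrix.zero_mulVec]
    rw [Matrix.mulVec_smul] at h1
    exact (smul_eq_zero.mp h1).resolve_left hr

end Domain

theorem mytorsion_eq_bot_iff {R : Type*} [CommRing R] [IsDomain R] [IsNoetherianRing R]
    (N : Type*) [AddCommGroup N] [Module R N] :
    Submodule.torsion R N = ⊥ ↔ (Subsingleton N ∨ associatedPrimes R N = {⊥}) := by
  constructor
  · intro h
    by_cases hs : Subsingleton N
    · exact Or.inl hs
    right
    have hne : Nontrivial N := not_subsingleton_iff_nontrivial.mp hs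
    have hsub : associatedPrimes R N ⊆ {⊥} := by
      rintro p ⟨hp, x, hx⟩
      have hx0 : x ≠ 0 := by
        rintro rfl
        have hct : (⊥ : Submodule R N).colon {(0 : N)} = ⊤ := by
          rw [Ideal.eq_top_iff_one, Submodule.mem_colon_singleton, smul_zero]
          exact Submodule.zero_mem _
        rw [hct, Ideal.radical_top] at hx
        exact hp.ne_top hx
      have hple : p ≤ ⊥ := by
        intro r hr
        rw [hx] at hr
        obtain ⟨m, hm⟩ := hr
        rw [Submodule.mem_colon_singleton, Submodule.mem_bot] at hm
        by_contra hr0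
        have hxt : x ∈ Submodule.torsion R N :=
          ⟨⟨r ^ m, mem_nonZeroDivisors_of_ne_zero (pow_ne_zero m hr0)⟩, hm⟩
        rw [h] at hxt
        exact hx0 hxt
      exact le_bot_iff.mp hple
    obtain ⟨x, hx0⟩ := exists_ne (0 : N)
    obtain ⟨P, hP, -⟩ := exists_le_isAssociatedPrime_of_isNoetherianRing R x hx0
    have hPb : P = ⊥ := hsub hP
    exact Set.Subset.antisymm hsub (Set.singleton_subset_iff.mpr (hPb ▸ hP))
  · rintro (hs | hass)
    · rw [Submodule.eq_bot_iff]
      intro x _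
      exact Subsingleton.elim x 0
    · rw [Submodule.eq_bot_iff]
      rintro x ⟨a, ha⟩
      by_contra hx0
      obtain ⟨P, hP, hle⟩ := exists_le_isAssociatedPrime_of_isNoetherianRing R x hx0
      have hPb : P = ⊥ := by
        have h2 : P ∈ associatedPrimes R N := hP
        rw [hass] at h2
        exact h2
      have hmem : (a : R) ∈ (⊥ : Submodule R N).colon {x} := by
        rw [Submodule.mem_colon_singleton, Submodule.mem_bot]
        exact ha
      have : (a : R) ∈ P := hle hmem
      rw [hPb] at this
      exact nonZeroDivisors.coe_ne_zero a this

/-- Over `R = ℂ[∂1,…,∂n]`: with `B` a syzygy matrix of `A` and `M = im(Aᵀ) ⊆ R^k`, the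
sequence `R^ℓ →Aᵀ R^k →Bᵀ R^{k'}` is exact iff `R^k/M` is torsion-free, which holds iff
`M = R^k` or `Ass(R^k/M) = {(0)}`. -/
theorem transpose_exact_iff_torsion_free (n : ℕ) {l k k' : ℕ}
    (A : Matrix (Fin l) (Fin k) (MvPolynomial (Fin n) ℂ))
    (B : Matrix (Fin k) (Fin k') (MvPolynomial (Fin n) ℂ))
    (hB : Function.Exact B.mulVecLin A.mulVecLin) :
    (Function.Exact A.transpose.mulVecLin B.transpose.mulVecLin
      ↔ Submodule.torsion (MvPolynomial (Fin n) ℂ)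
          ((Fin k → MvPolynomial (Fin n) ℂ) ⧸ LinearMap.range A.transpose.mulVecLin) = ⊥)
    ∧ (Submodule.torsion (MvPolynomial (Fin n) ℂ)
          ((Fin k → MvPolynomial (Fin n) ℂ) ⧸ LinearMap.range A.transpose.mulVecLin) = ⊥
      ↔ (LinearMap.range A.transpose.mulVecLin = (⊤ : Submodule (MvPolynomial (Fin n) ℂ)
            (Fin k → MvPolynomial (Fin n) ℂ))
         ∨ associatedPrimes (MvPolynomial (Fin n) ℂ)
            ((Fin k → MvPolynomial (Fin n) ℂ) ⧸ LinearMap.range A.transpose.mulVecLin) = {⊥})) := by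
  refine ⟨⟨?_, ?_⟩, ?_⟩
  · intro hex
    rw [Submodule.eq_bot_iff]
    intro m hm
    obtain ⟨x, rfl⟩ := Submodule.mkQ_surjective (LinearMap.range A.transpose.mulVecLin) m
    obtain ⟨a, ha⟩ := (Submodule.mem_torsion_iff _).mp hm
    have hmem : (a : MvPolynomial (Fin n) ℂ) • x ∈ LinearMap.range A.transpose.mulVecLin := by
      rw [← Submodule.Quotient.mk_eq_zero]
      rw [Submonoid.smul_def, ← map_smul (Submodule.mkQ _) ((a : MvPolynomial (Fin n) ℂ)) x] at ha
      exact ha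
    have hBx : B.transpose.mulVecLin x = 0 :=
      (myaux_key A B hB x).mpr ⟨(a : MvPolynomial (Fin n) ℂ), nonZeroDivisors.coe_ne_zero a, hmem⟩
    obtain ⟨y, hy⟩ := (hex x).mp hBx
    rw [Submodule.mkQ_apply, Submodule.Quotient.mk_eq_zero]
    exact ⟨y, hy⟩
  · intro htor x
    constructor
    · intro hx
      obtain ⟨r, hr, hmem⟩ := (myaux_key A B hB x).mp hx
      have hq : (LinearMap.range A.transpose.mulVecLin).mkQ x ∈
          Submodule.torsion (MvPolynomial (Fin n) ℂ)
            ((Fin k → MvPolynomial (Fin n) ℂ) ⧸ LinearMap.range A.transpose.mulVecLin) := by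
        refine ⟨⟨r, mem_nonZeroDivisors_of_ne_zero hr⟩, ?_⟩
        rw [Submonoid.smul_def, ← map_smul (Submodule.mkQ _) r x, Submodule.mkQ_apply,
          Submodule.Quotient.mk_eq_zero]
        exact hmem
      rw [htor, Submodule.mem_bot] at hq
      rw [Submodule.mkQ_apply, Submodule.Quotient.mk_eq_zero] at hq
      exact hq
    · rintro ⟨y, rfl⟩
      refine (myaux_key A B hB _).mpr ⟨1, one_ne_zero, y, ?_⟩
      rw [one_smul]
  · rw [mytorsion_eq_bot_iff, Submodule.Quotient.subsingleton_iff]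
end

section
/- For the Saint-Venant setting: a pair (y, z) with y ∈ ℂ^n nonzero and z a symmetric n×n complex matrix satisfies y_i y_j z_{ab} + y_a y_b z_{ij} − y_i y_a z_{jb} − y_j y_b z_{ia} = 0 for all indices i,j,a,b if and only if all 3×3 minors of the (n+1)×(n+1) symmetric matrix with (0, y^T) as first row, y as first column, and z as the remaining block vanish. -/
/-- The augmented `(n+1)×(n+1)` symmetric matrix with `0` in the corner, `y` as first
row/column, and `z` as the remaining block. -/
def svAug {n : ℕ} (y : Fin n → ℂ) (z : Matrix (Fin n) (Fin n) ℂ) :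
    Matrix (Fin (n + 1)) (Fin (n + 1)) ℂ :=
  Matrix.of fun r c =>
    Fin.cases (Fin.cases 0 y c) (fun i => Fin.cases (y i) (fun j => z i j) c) r

/-- Saint-Venant incidence: for `y ≠ 0` and symmetric `z`, the Saint-Venant equations
`A(y)z = 0` hold iff all `3×3` minors of the augmented matrix vanish. -/
theorem saint_venant_minors {n : ℕ} (y : Fin n → ℂ) (hy : y ≠ 0)
    (z : Matrix (Fin n) (Fin n) ℂ) (hz : z.IsSymm) :
    (∀ i j a b : Fin n,
        y i * y j * z a b + y a * y b * z i j - y i * y a * z j b - y j * y b * z i a = 0)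
      ↔ (∀ (r c : Fin 3 → Fin (n + 1)), ((svAug y z).submatrix r c).det = 0) := by
  constructor
  · intro h r c
    obtain ⟨k, hk⟩ : ∃ k, y k ≠ 0 := by
      by_contra hc; push_neg at hc; exact hy (funext fun i => hc i)
    set v : Fin n → ℂ := fun i => z i k / y k - z k k * y i / (2 * y k ^ 2) with hv
    set A : Fin (n+1) → ℂ := Fin.cases 0 y with hA
    set B : Fin (n+1) → ℂ := Fin.cases 1 v with hB
    have hent : ∀ x w : Fin (n+1), svAug y z x w = A x * B w + B x * A w := by
      intro x w
      induction x using Fin.cases with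
      | zero =>
        induction w using Fin.cases with
        | zero => simp [svAug, hA, hB]
        | succ j => simp [svAug, hA, hB]
      | succ i =>
        induction w using Fin.cases with
        | zero => simp [svAug, hA, hB]
        | succ j =>
          simp only [svAug, hA, hB, Matrix.of_apply, Fin.cases_succ, hv]
          have := h i j k k
          field_simp
          ring_nf
          ring_nf at this
          linear_combination 2 * this
    simp only [Matrix.det_fin_three, Matrix.submatrix_apply, hent]
    ring
  · intro h i j a b
    have h1 := h ![0, i.succ, j.succ] ![0, a.succ, b.succ]
    have h2 := h ![0, i.succ, a.succ] ![0, j.succ, b.succ]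
    rw [Matrix.det_fin_three] at h1 h2
    simp [Matrix.det_fin_three, svAug, Fin.isValue] at h1 h2
    have hs := hz.apply a j
    linear_combination h1 - h2 - y b * y i * hs
end

section
/- Consider A(y) = [[y1^2, y2^2, y3^2], [−y2^2, y3^2, y1^2], [−y3^2, −y1^2, y2^2]]. Then det A(y) = y1^6 + y2^6 + y3^6 + y1^2 y2^2 y3^2 (up to sign/scalar normalization), and a nonzero z ∈ ℂ^3 lies in ker A(y) for some y ∈ ℂ^3 \ {0} if and only if z1^3 − z2^3 + z3^3 − z1 z2 z3 = 0. -/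
/-- For `A(y) = [[y₁²,y₂²,y₃²],[−y₂²,y₃²,y₁²],[−y₃²,−y₁²,y₂²]]`: the determinant is
`y₁⁶+y₂⁶+y₃⁶+y₁²y₂²y₃²`, and a nonzero `z` lies in `ker A(y)` for some nonzero `y` iff
`z₁³ − z₂³ + z₃³ − z₁z₂z₃ = 0`. -/
theorem sextic_support_cubic_wave :
    (∀ y : Fin 3 → ℂ,
      (!![(y 0)^2, (y 1)^2, (y 2)^2;
          -(y 1)^2, (y 2)^2, (y 0)^2;
          -(y 2)^2, -(y 0)^2, (y 1)^2] : Matrix (Fin 3) (Fin 3) ℂ).det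
        = (y 0)^6 + (y 1)^6 + (y 2)^6 + (y 0)^2 * (y 1)^2 * (y 2)^2)
    ∧ (∀ z : Fin 3 → ℂ, z ≠ 0 →
      ((∃ y : Fin 3 → ℂ, y ≠ 0 ∧
          (!![(y 0)^2, (y 1)^2, (y 2)^2;
              -(y 1)^2, (y 2)^2, (y 0)^2;
              -(y 2)^2, -(y 0)^2, (y 1)^2] : Matrix (Fin 3) (Fin 3) ℂ).mulVec z = 0)
        ↔ (z 0)^3 - (z 1)^3 + (z 2)^3 - z 0 * z 1 * z 2 = 0)) := by
  constructor
  · intro y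
    simp [Matrix.det_fin_three]
    ring
  · intro z hz
    set M : Matrix (Fin 3) (Fin 3) ℂ :=
      !![z 0, z 1, z 2; z 2, -z 0, z 1; -z 1, z 2, -z 0] with hM
    have hdetM : M.det = (z 0)^3 - (z 1)^3 + (z 2)^3 - z 0 * z 1 * z 2 := by
      simp [hM, Matrix.det_fin_three]
      ring
    constructor
    · rintro ⟨y, hy, hA⟩
      have h0 := congrFun hA 0
      have h1 := congrFun hA 1
      have h2 := congrFun hA 2
      simp [Matrix.mulVec, dotProduct, Fin.sum_univ_three] at h0 h1 h2
      have hv : ∃ v ≠ (0 : Fin 3 → ℂ), M.mulVec v = 0 := by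
        refine ⟨fun i => (y i)^2, ?_, ?_⟩
        · intro h
          apply hy
          funext i
          have := congrFun h i
          simpa using this
        · funext i
          fin_cases i <;>
            simp [hM, Matrix.mulVec, dotProduct, Fin.sum_univ_three] <;>
            first | linear_combination h0 | linear_combination h1 | linear_combination h2
      have := Matrix.exists_mulVec_eq_zero_iff.mp hv
      rw [hdetM] at this
      exact this
    · intro hc
      obtain ⟨v, hv, hMv⟩ := Matrix.exists_mulVec_eq_zero_iff.mpr (by rw [hdetM]; exact hc)
      choose w hw using fun i => IsAlgClosed.exists_pow_nat_eq (v i) (n := 2) (by norm_num)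
      have g0 := congrFun hMv 0
      have g1 := congrFun hMv 1
      have g2 := congrFun hMv 2
      simp [hM, Matrix.mulVec, dotProduct, Fin.sum_univ_three] at g0 g1 g2
      refine ⟨w, ?_, ?_⟩
      · intro h
        apply hv
        funext i
        have hwi : w i = 0 := congrFun h i
        have := hw i
        rw [hwi] at this
        simpa using this.symm
      · funext i
        fin_cases i <;>
          simp [Matrix.mulVec, dotProduct, Fin.sum_univ_three, hw] <;>
          first | linear_combination g0 | linear_combination g1 | linear_combination g2
end

section
/- For the Cayley cubic matrix C(z) = [[z1, z2, z3, 0], [z2, z1, 0, z3], [z3, 0, z1, z2]], a nonzero z ∈ ℂ^3 satisfies rank C(z) ≤ 2 if and only if z is a scalar multiple of one of the six vectors (1,1,0), (1,−1,0), (1,0,1), (1,0,−1), (0,1,1), (0,1,−1). -/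
lemma sub_eq (M : Matrix (Fin 3) (Fin 4) ℂ) (f : Fin 3 → Fin 4) :
    M.submatrix id f = M * Matrix.of (fun j i => if j = f i then (1:ℂ) else 0) := by
  ext i k
  simp [Matrix.mul_apply]

lemma minor_zero {M : Matrix (Fin 3) (Fin 4) ℂ} (h : M.rank ≤ 2) (f : Fin 3 → Fin 4) :
    (M.submatrix id f).det = 0 := by
  by_contra hd
  have h3 : (M.submatrix id f).rank = 3 :=
    Matrix.rank_of_isUnit _ ((Matrix.isUnit_iff_isUnit_det _).mpr (Ne.isUnit hd))
  have hle : (M.submatrix id f).rank ≤ M.rank := by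
    rw [sub_eq]; exact Matrix.rank_mul_le_left _ _
  omega

lemma rank_le_two {M : Matrix (Fin 3) (Fin 4) ℂ} (A : Matrix (Fin 3) (Fin 2) ℂ)
    (B : Matrix (Fin 2) (Fin 4) ℂ) (h : M = A * B) : M.rank ≤ 2 := by
  rw [h]
  exact (Matrix.rank_mul_le_left A B).trans (Matrix.rank_le_card_width A)

/-- For the Cayley cubic matrix `C(z)`, a nonzero `z ∈ ℂ³` satisfies `rank C(z) ≤ 2` iff
`z` is a nonzero scalar multiple of one of the six points `(1,±1,0),(1,0,±1),(0,1,±1)`. -/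
theorem cayley_rank_drop (z : Fin 3 → ℂ) (hz : z ≠ 0) :
    (!![z 0, z 1, z 2, 0;
        z 1, z 0, 0, z 2;
        z 2, 0, z 0, z 1] : Matrix (Fin 3) (Fin 4) ℂ).rank ≤ 2
      ↔ ∃ c : ℂ, c ≠ 0 ∧
          (z = c • ![1, 1, 0] ∨ z = c • ![1, -1, 0] ∨ z = c • ![1, 0, 1] ∨
           z = c • ![1, 0, -1] ∨ z = c • ![0, 1, 1] ∨ z = c • ![0, 1, -1]) := by
  constructor
  · intro h
    have h1 := minor_zero h ![0,1,2]
    have h2 := minor_zero h ![0,1,3]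
    have h3 := minor_zero h ![0,2,3]
    have h4 := minor_zero h ![1,2,3]
    simp [Matrix.det_fin_three] at h1 h2 h3 h4
    ring_nf at h1 h2 h3 h4
    have habc : z 0 = 0 ∨ z 1 = 0 ∨ z 2 = 0 := by
      have h : z 0 * z 1 * z 2 = 0 := by linear_combination -h4/2
      rcases mul_eq_zero.mp h with h | h
      · rcases mul_eq_zero.mp h with h | h
        · exact Or.inl h
        · exact Or.inr (Or.inl h)
      · exact Or.inr (Or.inr h)
    rcases habc with ha | hb | hc
    · -- z 0 = 0
      have hb : z 1 ≠ 0 := by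
        intro hb
        have hcc : z 2 ^ 3 = 0 := by linear_combination h3 + z 0 * z 2 * ha + z 1 * z 2 * hb
        have hc : z 2 = 0 := pow_eq_zero_iff (by norm_num) |>.mp hcc
        exact hz (funext fun i => by fin_cases i <;> simp [ha, hb, hc])
      have hfac : z 1 * ((z 2 - z 1) * (z 2 + z 1)) = 0 := by
        linear_combination h2 - z 0 * z 1 * ha
      rcases mul_eq_zero.mp hfac with h | h
      · exact absurd h hb
      rcases mul_eq_zero.mp h with h | h
      · exact ⟨z 1, hb, Or.inr (Or.inr (Or.inr (Or.inr (Or.inl (funext fun i => by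
          fin_cases i <;> simp [ha, sub_eq_zero.mp h] <;> ring)))))⟩
      · exact ⟨z 1, hb, Or.inr (Or.inr (Or.inr (Or.inr (Or.inr (funext fun i => by
          fin_cases i <;> simp [ha, eq_neg_of_add_eq_zero_left h] <;> ring)))))⟩
    · -- z 1 = 0
      have ha : z 0 ≠ 0 := by
        intro ha
        have hcc : z 2 ^ 3 = 0 := by linear_combination h3 + z 0 * z 2 * ha + z 1 * z 2 * hb
        have hc : z 2 = 0 := pow_eq_zero_iff (by norm_num) |>.mp hcc
        exact hz (funext fun i => by fin_cases i <;> simp [ha, hb, hc])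
      have hfac : z 0 * ((z 2 - z 0) * (z 2 + z 0)) = 0 := by
        linear_combination -h1 - z 0 * z 1 * hb
      rcases mul_eq_zero.mp hfac with h | h
      · exact absurd h ha
      rcases mul_eq_zero.mp h with h | h
      · exact ⟨z 0, ha, Or.inr (Or.inr (Or.inl (funext fun i => by
          fin_cases i <;> simp [hb, sub_eq_zero.mp h] <;> ring)))⟩
      · exact ⟨z 0, ha, Or.inr (Or.inr (Or.inr (Or.inl (funext fun i => by
          fin_cases i <;> simp [hb, eq_neg_of_add_eq_zero_left h] <;> ring))))⟩
    · -- z 2 = 0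
      have ha : z 0 ≠ 0 := by
        intro ha
        have hbb : z 1 ^ 3 = 0 := by linear_combination -h2 + z 0 * z 1 * ha + z 1 * z 2 * hc
        have hb : z 1 = 0 := pow_eq_zero_iff (by norm_num) |>.mp hbb
        exact hz (funext fun i => by fin_cases i <;> simp [ha, hb, hc])
      have hfac : z 0 * ((z 1 - z 0) * (z 1 + z 0)) = 0 := by
        linear_combination -h1 - z 0 * z 2 * hc
      rcases mul_eq_zero.mp hfac with h | h
      · exact absurd h ha
      rcases mul_eq_zero.mp h with h | h
      · exact ⟨z 0, ha, Or.inl (funext fun i => by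
          fin_cases i <;> simp [hc, sub_eq_zero.mp h] <;> ring)⟩
      · exact ⟨z 0, ha, Or.inr (Or.inl (funext fun i => by
          fin_cases i <;> simp [hc, eq_neg_of_add_eq_zero_left h] <;> ring))⟩
  · rintro ⟨c, hc, h | h | h | h | h | h⟩ <;>
    [ (have h0 := congrFun h 0; have h1 := congrFun h 1; have h2 := congrFun h 2;
       simp at h0 h1 h2;
       exact rank_le_two !![1,0;1,0;0,1] !![c,c,0,0;0,0,c,c] (by
         ext i j; fin_cases i <;> fin_cases j <;>
           simp [Matrix.mul_apply, Fin.sum_univ_succ, Matrix.vecHead, Matrix.vecTail, h0, h1, h2]));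
      (have h0 := congrFun h 0; have h1 := congrFun h 1; have h2 := congrFun h 2;
       simp at h0 h1 h2;
       exact rank_le_two !![1,0;-1,0;0,1] !![c,-c,0,0;0,0,c,-c] (by
         ext i j; fin_cases i <;> fin_cases j <;>
           simp [Matrix.mul_apply, Fin.sum_univ_succ, Matrix.vecHead, Matrix.vecTail, h0, h1, h2]));
      (have h0 := congrFun h 0; have h1 := congrFun h 1; have h2 := congrFun h 2;
       simp at h0 h1 h2;
       exact rank_le_two !![1,0;0,1;1,0] !![c,0,c,0;0,c,0,c] (by
         ext i j; fin_cases i <;> fin_cases j <;>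
           simp [Matrix.mul_apply, Fin.sum_univ_succ, Matrix.vecHead, Matrix.vecTail, h0, h1, h2]));
      (have h0 := congrFun h 0; have h1 := congrFun h 1; have h2 := congrFun h 2;
       simp at h0 h1 h2;
       exact rank_le_two !![1,0;0,1;-1,0] !![c,0,-c,0;0,c,0,-c] (by
         ext i j; fin_cases i <;> fin_cases j <;>
           simp [Matrix.mul_apply, Fin.sum_univ_succ, Matrix.vecHead, Matrix.vecTail, h0, h1, h2]));
      (have h0 := congrFun h 0; have h1 := congrFun h 1; have h2 := congrFun h 2;
       simp at h0 h1 h2;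
       exact rank_le_two !![1,0;0,1;0,1] !![0,c,c,0;c,0,0,c] (by
         ext i j; fin_cases i <;> fin_cases j <;>
           simp [Matrix.mul_apply, Fin.sum_univ_succ, Matrix.vecHead, Matrix.vecTail, h0, h1, h2]));
      (have h0 := congrFun h 0; have h1 := congrFun h 1; have h2 := congrFun h 2;
       simp at h0 h1 h2;
       exact rank_le_two !![1,0;0,1;0,-1] !![0,c,-c,0;c,0,0,-c] (by
         ext i j; fin_cases i <;> fin_cases j <;>
           simp [Matrix.mul_apply, Fin.sum_univ_succ, Matrix.vecHead, Matrix.vecTail, h0, h1, h2]))]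
end
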